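/- If the vector of functionals satisfies the evolution equation (dU/dt)(B) = U(zB) − U(B) U(z P_0) for all B ∈ (ℂ[z])², then each vector polynomial B_n of the associated family satisfies Ḃ_n(z) = −C_n B_{n-1}(z) − D_n B_n(z), where D_n = [[0,0],[b_{2n+1},0]] and C_n = [[c_{2n-1}, b_{2n}],[0, c_{2n}]]. -/

import Mathlib

open Polynomial Matrix

noncomputable section

/-- Auxiliary shifted sequence: `Paux (n+2) = P_n`. -/
def Paux (a b c : ℕ → ℂ) : ℕ → Polynomial ℂ
  | 0 => 0
  | 1 => 0
  | 2 => 1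
  | n + 3 =>
      (X - C (a (n + 1))) * Paux a b c (n + 2)
        - C (b n) * Paux a b c (n + 1) - C (c (n - 1)) * Paux a b c n


/-- The polynomials `P_n` of the four-term recurrence. -/
def Pp (a b c : ℕ → ℂ) (n : ℕ) : Polynomial ℂ := Paux a b c (n + 2)

/-- The vector polynomials `B_m = (P_{2m}, P_{2m+1})ᵀ`. -/
def Bv (a b c : ℕ → ℂ) (m : ℕ) : Fin 2 → Polynomial ℂ :=
  ![Pp a b c (2 * m), Pp a b c (2 * m + 1)]

/-- The time-dependent vector polynomials `B_m(·, t)`. -/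
def Bvt (a b c : ℕ → ℝ → ℂ) (t : ℝ) (m : ℕ) : Fin 2 → Polynomial ℂ :=
  Bv (fun n => a n t) (fun n => b n t) (fun n => c n t) m

/-- `B_{k-1}(·, t)`, with the convention `B_{-1} = 0`. -/
def Bvtprev (a b c : ℕ → ℝ → ℂ) (t : ℝ) : ℕ → Fin 2 → Polynomial ℂ
  | 0 => 0
  | m + 1 => Bvt a b c t m

/-- The block `C_n(t)`, with `C_0 = [[1,0],[−a_1,1]]`. -/
def Cblk (a b c : ℕ → ℝ → ℂ) (n : ℕ) (t : ℝ) : Matrix (Fin 2) (Fin 2) ℂ :=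
  if n = 0 then !![1, 0; -(a 1 t), 1]
  else !![c (2 * n - 1) t, b (2 * n) t; 0, c (2 * n) t]

/-- The product `C_m(t) C_{m-1}(t) ⋯ C_0(t)`. -/
def Cprod (a b c : ℕ → ℝ → ℂ) (t : ℝ) : ℕ → Matrix (Fin 2) (Fin 2) ℂ
  | 0 => Cblk a b c 0 t
  | m + 1 => Cblk a b c (m + 1) t * Cprod a b c t m

/-- The block `D_n(t) = [[0,0],[b_{2n+1},0]]`. -/
def Dblk (b : ℕ → ℝ → ℂ) (n : ℕ) (t : ℝ) : Matrix (Fin 2) (Fin 2) ℂ :=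
  !![0, 0; b (2 * n + 1) t, 0]

/-- The vector `P₀(z) = (1, z)ᵀ`. -/
def P0vec : Fin 2 → Polynomial ℂ := ![1, X]

section AuxA

variable (a b c : ℕ → ℝ → ℂ)

/-- time-dependent Paux -/
def PT (M : ℕ) (s : ℝ) : Polynomial ℂ :=
  Paux (fun n => a n s) (fun n => b n s) (fun n => c n s) M

lemma PT_zero (s : ℝ) : PT a b c 0 s = 0 := rfl
lemma PT_one (s : ℝ) : PT a b c 1 s = 0 := rfl
lemma PT_two (s : ℝ) : PT a b c 2 s = 1 := rfl

lemma PT_succ (m : ℕ) (s : ℝ) :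
    PT a b c (m+3) s = (X - C (a (m+1) s)) * PT a b c (m+2) s
      - C (b m s) * PT a b c (m+1) s - C (c (m-1) s) * PT a b c m s := rfl

/-- the three-term style recurrence rewritten: X * P_M -/
lemma PT_rec (M : ℕ) (hM : 2 ≤ M) (s : ℝ) :
    X * PT a b c M s = PT a b c (M+1) s + C (a (M-1) s) * PT a b c M s
      + C (b (M-2) s) * PT a b c (M-1) s + C (c (M-3) s) * PT a b c (M-2) s := by
  obtain ⟨m, rfl⟩ : ∃ m, M = m + 2 := ⟨M - 2, by omega⟩
  have h := PT_succ a b c m s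
  have e1 : m + 2 + 1 = m + 3 := rfl
  have e2 : m + 2 - 1 = m + 1 := rfl
  have e3 : m + 2 - 2 = m := rfl
  have e4 : m + 2 - 3 = m - 1 := rfl
  rw [e1, e2, e3, e4, h]
  ring

lemma PT_natDegree_le : ∀ (M : ℕ) (s : ℝ), (PT a b c M s).natDegree ≤ M
  | 0, s => by simp [PT_zero]
  | 1, s => by simp [PT_one]
  | 2, s => by simp [PT_two]
  | (m+3), s => by
      rw [PT_succ]
      refine le_trans (natDegree_sub_le _ _) ?_
      refine max_le (le_trans (natDegree_sub_le _ _) (max_le ?_ ?_)) ?_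
      · refine le_trans (natDegree_mul_le) ?_
        have h1 : (X - C (a (m+1) s)).natDegree ≤ 1 := natDegree_X_sub_C_le _
        have h2 := PT_natDegree_le (m+2) s
        omega
      · refine le_trans (natDegree_mul_le) ?_
        have h1 : (C (b m s)).natDegree = 0 := natDegree_C _
        have h2 := PT_natDegree_le (m+1) s
        omega
      · refine le_trans (natDegree_mul_le) ?_
        have h1 : (C (c (m-1) s)).natDegree = 0 := natDegree_C _
        have h2 := PT_natDegree_le m s
        omega

end AuxA

/-- coefficient-wise derivative of a polynomial family -/
def HDP (F : ℝ → Polynomial ℂ) (D : Polynomial ℂ) (t : ℝ) : Prop :=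
  ∀ k, HasDerivAt (fun s => (F s).coeff k) (D.coeff k) t

lemma HDP.const (p : Polynomial ℂ) (t : ℝ) : HDP (fun _ => p) 0 t := by
  intro k
  simpa using hasDerivAt_const t (p.coeff k)

lemma HDP.add {F G : ℝ → Polynomial ℂ} {D E : Polynomial ℂ} {t : ℝ}
    (hF : HDP F D t) (hG : HDP G E t) : HDP (fun s => F s + G s) (D + E) t := by
  intro k
  simpa [coeff_add] using (hF k).fun_add (hG k)

lemma HDP.sub {F G : ℝ → Polynomial ℂ} {D E : Polynomial ℂ} {t : ℝ}
    (hF : HDP F D t) (hG : HDP G E t) : HDP (fun s => F s - G s) (D - E) t := by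
  intro k
  simpa [coeff_sub] using (hF k).fun_sub (hG k)

lemma HDP.neg {F : ℝ → Polynomial ℂ} {D : Polynomial ℂ} {t : ℝ}
    (hF : HDP F D t) : HDP (fun s => - F s) (-D) t := by
  intro k
  simpa [coeff_neg] using (hF k).fun_neg

lemma HDP.C_mul {f : ℝ → ℂ} {d : ℂ} {F : ℝ → Polynomial ℂ} {D : Polynomial ℂ} {t : ℝ}
    (hf : HasDerivAt f d t) (hF : HDP F D t) :
    HDP (fun s => C (f s) * F s) (C d * F t + C (f t) * D) t := by
  intro k
  simpa [coeff_C_mul, coeff_add] using (hf.fun_mul (hF k))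

lemma HDP.X_mul {F : ℝ → Polynomial ℂ} {D : Polynomial ℂ} {t : ℝ}
    (hF : HDP F D t) : HDP (fun s => X * F s) (X * D) t := by
  intro k
  match k with
  | 0 => simpa [coeff_X_mul_zero] using (hasDerivAt_const t (0:ℂ))
  | (k+1) => simpa [coeff_X_mul] using hF k

lemma HDP.congr_poly {F : ℝ → Polynomial ℂ} {D E : Polynomial ℂ} {t : ℝ}
    (hF : HDP F D t) (h : D = E) : HDP F E t := h ▸ hF

lemma HDP.congr_fun {F G : ℝ → Polynomial ℂ} {D : Polynomial ℂ} {t : ℝ}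
    (hF : HDP F D t) (h : ∀ s, F s = G s) : HDP G D t := by
  have : F = G := funext h
  exact this ▸ hF


section B
variable (U : ℝ → ((Fin 2 → Polynomial ℂ) →ₗ[ℂ] Matrix (Fin 2) (Fin 2) ℂ))

def Wf (t : ℝ) (p : Polynomial ℂ) : Fin 2 → ℂ := fun j => U t ![p, 0] 0 j

lemma vec_add (p q : Polynomial ℂ) : (![p + q, 0] : Fin 2 → Polynomial ℂ) = ![p, 0] + ![q, 0] := by
  funext i; fin_cases i <;> simp

lemma vec_smul (e : ℂ) (p : Polynomial ℂ) :
    (![C e * p, 0] : Fin 2 → Polynomial ℂ) = e • ![p, 0] := by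
  funext i; fin_cases i <;> simp [Polynomial.smul_eq_C_mul]

lemma Wf_add (t : ℝ) (p q : Polynomial ℂ) (j : Fin 2) :
    Wf U t (p + q) j = Wf U t p j + Wf U t q j := by
  unfold Wf
  rw [vec_add, map_add]
  rfl

lemma Wf_smul (t : ℝ) (e : ℂ) (p : Polynomial ℂ) (j : Fin 2) :
    Wf U t (C e * p) j = e * Wf U t p j := by
  unfold Wf
  rw [vec_smul, _root_.map_smul]
  rfl

lemma Wf_zero (t : ℝ) (j : Fin 2) : Wf U t 0 j = 0 := by
  have : (![(0:Polynomial ℂ), 0] : Fin 2 → Polynomial ℂ) = 0 := by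
    funext i; fin_cases i <;> simp
  unfold Wf
  rw [this, map_zero]
  rfl

lemma Wf_sum {α : Type*} (t : ℝ) (s : Finset α) (f : α → Polynomial ℂ) (j : Fin 2) :
    Wf U t (∑ i ∈ s, f i) j = ∑ i ∈ s, Wf U t (f i) j := by
  classical
  induction s using Finset.induction_on with
  | empty => simpa using Wf_zero U t j
  | insert _ _ hnot ih =>
      rw [Finset.sum_insert hnot, Finset.sum_insert hnot, Wf_add, ih]

lemma Wf_decomp (t : ℝ) (p : Polynomial ℂ) (N k : ℕ) (hdeg : p.natDegree < N) (j : Fin 2) :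
    Wf U t (X ^ k * p) j = ∑ i ∈ Finset.range N, p.coeff i * Wf U t (X ^ (k + i)) j := by
  have hp : X ^ k * p = ∑ i ∈ Finset.range N, C (p.coeff i) * X ^ (k + i) := by
    conv_lhs => rw [p.as_sum_range' N hdeg]
    rw [Finset.mul_sum]
    refine Finset.sum_congr rfl fun i _ => ?_
    rw [← C_mul_X_pow_eq_monomial, pow_add]
    ring
  rw [hp, Wf_sum]
  refine Finset.sum_congr rfl fun i _ => ?_
  rw [Wf_smul]
end B


section C
variable (a b c : ℕ → ℝ → ℂ)
variable (U : ℝ → ((Fin 2 → Polynomial ℂ) →ₗ[ℂ] Matrix (Fin 2) (Fin 2) ℂ))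

/-- scalar moments -/
def nuF (s : ℝ) (M k : ℕ) (j : Fin 2) : ℂ := Wf U s (X ^ k * PT a b c M s) j

def PsiM (t : ℝ) : Matrix (Fin 2) (Fin 2) ℂ := U t (fun r => X * P0vec r)

def dP (M : ℕ) (t : ℝ) : Polynomial ℂ :=
  -(C (b (M-2) t) * PT a b c (M-1) t) - C (c (M-3) t) * PT a b c (M-2) t

def StarP (M : ℕ) : Prop := ∀ t, HDP (fun s => PT a b c M s) (dP a b c M t) t

def HM2 : Prop := ∀ t : ℝ, ∀ (A : Matrix (Fin 2) (Fin 2) ℂ) (Q : Fin 2 → Polynomial ℂ),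
      U t (A.map C *ᵥ Q) = A * U t Q

lemma U_row (hM2 : HM2 U) (t : ℝ) (Q : Fin 2 → Polynomial ℂ) (i j : Fin 2) :
    U t Q i j = Wf U t (Q i) j := by
  fin_cases i
  · have hA : ((!![1,0;0,0] : Matrix (Fin 2) (Fin 2) ℂ).map C) *ᵥ Q = ![Q 0, 0] := by
      funext r; fin_cases r <;>
        simp [Matrix.mulVec, Matrix.map_apply, dotProduct, Fin.sum_univ_two]
    have h := hM2 t !![1,0;0,0] Q
    rw [hA] at h
    show U t Q 0 j = Wf U t (Q 0) j
    unfold Wf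
    rw [h, Matrix.mul_apply, Fin.sum_univ_two]
    simp
  · have hA : ((!![0,1;0,0] : Matrix (Fin 2) (Fin 2) ℂ).map C) *ᵥ Q = ![Q 1, 0] := by
      funext r; fin_cases r <;>
        simp [Matrix.mulVec, Matrix.map_apply, dotProduct, Fin.sum_univ_two]
    have h := hM2 t !![0,1;0,0] Q
    rw [hA] at h
    show U t Q 1 j = Wf U t (Q 1) j
    unfold Wf
    rw [h, Matrix.mul_apply, Fin.sum_univ_two]
    simp

lemma Bvt_comp0 (t : ℝ) (m : ℕ) : Bvt a b c t m 0 = PT a b c (2*m+2) t := rfl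
lemma Bvt_comp1 (t : ℝ) (m : ℕ) : Bvt a b c t m 1 = PT a b c (2*m+3) t := rfl

lemma nuF_eq_U0 (hM2 : HM2 U) (t : ℝ) (m k : ℕ) (j : Fin 2) :
    nuF a b c U t (2*m+2) k j = U t (fun i => X ^ k * Bvt a b c t m i) 0 j := by
  rw [U_row U hM2]
  show _ = Wf U t (X ^ k * Bvt a b c t m 0) j
  rw [Bvt_comp0]
  rfl

lemma nuF_eq_U1 (hM2 : HM2 U) (t : ℝ) (m k : ℕ) (j : Fin 2) :
    nuF a b c U t (2*m+3) k j = U t (fun i => X ^ k * Bvt a b c t m i) 1 j := by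
  rw [U_row U hM2]
  show _ = Wf U t (X ^ k * Bvt a b c t m 1) j
  rw [Bvt_comp1]
  rfl

lemma nuF_orth (hM2 : HM2 U)
    (horth : ∀ t : ℝ, ∀ m j : ℕ, j < m → U t (fun i => X ^ j * Bvt a b c t m i) = 0)
    (t : ℝ) {M k : ℕ} (h : 2*k + 4 ≤ M) (j : Fin 2) :
    nuF a b c U t M k j = 0 := by
  obtain ⟨m, hm, hk⟩ : ∃ m, (M = 2*m+2 ∨ M = 2*m+3) ∧ k < m := ⟨(M-2)/2, by omega, by omega⟩
  rcases hm with hm | hm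
  · subst hm
    rw [nuF_eq_U0 a b c U hM2, horth t m k hk]
    rfl
  · subst hm
    rw [nuF_eq_U1 a b c U hM2, horth t m k hk]
    rfl

lemma nuF_mom0 (hM2 : HM2 U)
    (hmom : ∀ t : ℝ, ∀ m : ℕ, U t (fun i => X ^ m * Bvt a b c t m i) = Cprod a b c t m)
    (t : ℝ) (m : ℕ) (j : Fin 2) :
    nuF a b c U t (2*m+2) m j = Cprod a b c t m 0 j := by
  rw [nuF_eq_U0 a b c U hM2, hmom t m]

lemma nuF_mom1 (hM2 : HM2 U)
    (hmom : ∀ t : ℝ, ∀ m : ℕ, U t (fun i => X ^ m * Bvt a b c t m i) = Cprod a b c t m)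
    (t : ℝ) (m : ℕ) (j : Fin 2) :
    nuF a b c U t (2*m+3) m j = Cprod a b c t m 1 j := by
  rw [nuF_eq_U1 a b c U hM2, hmom t m]

lemma nuF_rec (t : ℝ) {M : ℕ} (hM : 2 ≤ M) (k : ℕ) (j : Fin 2) :
    nuF a b c U t M (k+1) j = nuF a b c U t (M+1) k j + a (M-1) t * nuF a b c U t M k j
      + b (M-2) t * nuF a b c U t (M-1) k j + c (M-3) t * nuF a b c U t (M-2) k j := by
  unfold nuF
  have hp : X^(k+1) * PT a b c M t = (X^k * PT a b c (M+1) t)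
      + C (a (M-1) t) * (X^k * PT a b c M t)
      + C (b (M-2) t) * (X^k * PT a b c (M-1) t)
      + C (c (M-3) t) * (X^k * PT a b c (M-2) t) := by
    linear_combination (X:Polynomial ℂ)^k * PT_rec a b c M hM t
  rw [hp, Wf_add, Wf_add, Wf_add, Wf_smul, Wf_smul, Wf_smul]

lemma flow_mono
    (hflow : ∀ (Q : Fin 2 → Polynomial ℂ) (t : ℝ) (i j : Fin 2),
      HasDerivAt (fun s => U s Q i j)
        ((U t (fun r => X * Q r) - U t Q * U t (fun r => X * P0vec r)) i j) t)
    (t : ℝ) (m : ℕ) (j : Fin 2) :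
    HasDerivAt (fun s => Wf U s (X^m) j)
      (Wf U t (X^(m+1)) j
        - (Wf U t (X^m) 0 * PsiM U t 0 j + Wf U t (X^m) 1 * PsiM U t 1 j)) t := by
  have h := hflow ![X^m, 0] t 0 j
  have hx : (fun r => X * (![(X:Polynomial ℂ)^m, 0] r)) = ![X^(m+1), 0] := by
    funext r; fin_cases r <;> simp [pow_succ']
  rw [hx] at h
  have hentry : (U t ![(X:Polynomial ℂ)^(m+1), 0] - U t ![X^m, 0] * U t (fun r => X * P0vec r)) 0 j
      = Wf U t (X^(m+1)) j
        - (Wf U t (X^m) 0 * PsiM U t 0 j + Wf U t (X^m) 1 * PsiM U t 1 j) := by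
    rw [Matrix.sub_apply, Matrix.mul_apply, Fin.sum_univ_two]
    rfl
  rw [hentry] at h
  exact h
end C

section D
variable (a b c : ℕ → ℝ → ℂ)
variable (U : ℝ → ((Fin 2 → Polynomial ℂ) →ₗ[ℂ] Matrix (Fin 2) (Fin 2) ℂ))

def HFlow : Prop := ∀ (Q : Fin 2 → Polynomial ℂ) (t : ℝ) (i j : Fin 2),
      HasDerivAt (fun s => U s Q i j)
        ((U t (fun r => X * Q r) - U t Q * U t (fun r => X * P0vec r)) i j) t

lemma flow_step (hflow : HFlow U) (t : ℝ) (M k : ℕ) (j : Fin 2) (D : Polynomial ℂ)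
    (hDdeg : D.natDegree ≤ M) (hstar : HDP (fun s => PT a b c M s) D t) :
    HasDerivAt (fun s => nuF a b c U s M k j)
      (Wf U t (X^(k+1) * PT a b c M t) j
        - (nuF a b c U t M k 0 * PsiM U t 0 j + nuF a b c U t M k 1 * PsiM U t 1 j)
        + Wf U t (X^k * D) j) t := by
  have hdeg : ∀ s : ℝ, (PT a b c M s).natDegree < M + 1 :=
    fun s => Nat.lt_succ_of_le (PT_natDegree_le a b c M s)
  have hfun : ∀ (jj : Fin 2) (s : ℝ), nuF a b c U s M k jj
      = ∑ i ∈ Finset.range (M+1), (PT a b c M s).coeff i * Wf U s (X^(k+i)) jj :=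
    fun jj s => Wf_decomp U s _ (M+1) k (hdeg s) jj
  have hterm : ∀ i ∈ Finset.range (M+1),
      HasDerivAt (fun s => (PT a b c M s).coeff i * Wf U s (X^(k+i)) j)
        ((D.coeff i * Wf U t (X^(k+i)) j + (PT a b c M t).coeff i * Wf U t (X^(k+i+1)) j)
          - ((PT a b c M t).coeff i * Wf U t (X^(k+i)) 0 * PsiM U t 0 j
             + (PT a b c M t).coeff i * Wf U t (X^(k+i)) 1 * PsiM U t 1 j)) t := by
    intro i _
    have h := (hstar i).fun_mul (flow_mono U hflow t (k+i) j)
    refine h.congr_deriv ?_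
    ring
  have hsum := HasDerivAt.fun_sum hterm
  have hfe : (fun s => ∑ i ∈ Finset.range (M+1), (PT a b c M s).coeff i * Wf U s (X^(k+i)) j)
      = fun s => nuF a b c U s M k j := funext fun s => (hfun j s).symm
  rw [hfe] at hsum
  refine hsum.congr_deriv ?_
  rw [Finset.sum_sub_distrib, Finset.sum_add_distrib, Finset.sum_add_distrib]
  have e1 : ∑ i ∈ Finset.range (M+1), D.coeff i * Wf U t (X^(k+i)) j
      = Wf U t (X^k * D) j := (Wf_decomp U t D (M+1) k (Nat.lt_succ_of_le hDdeg) j).symm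
  have e2 : ∑ i ∈ Finset.range (M+1), (PT a b c M t).coeff i * Wf U t (X^(k+i+1)) j
      = Wf U t (X^(k+1) * PT a b c M t) j := by
    rw [Wf_decomp U t _ (M+1) (k+1) (hdeg t) j]
    refine Finset.sum_congr rfl fun i _ => ?_
    rw [Nat.add_right_comm k i 1]
  have e3 : ∑ i ∈ Finset.range (M+1),
        (PT a b c M t).coeff i * Wf U t (X^(k+i)) 0 * PsiM U t 0 j
      = nuF a b c U t M k 0 * PsiM U t 0 j := by
    rw [hfun 0 t, Finset.sum_mul]
  have e4 : ∑ i ∈ Finset.range (M+1),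
        (PT a b c M t).coeff i * Wf U t (X^(k+i)) 1 * PsiM U t 1 j
      = nuF a b c U t M k 1 * PsiM U t 1 j := by
    rw [hfun 1 t, Finset.sum_mul]
  rw [e1, e2, e3, e4]
  ring

lemma dP_natDegree (M : ℕ) (t : ℝ) : (dP a b c M t).natDegree ≤ M := by
  unfold dP
  refine le_trans (natDegree_sub_le _ _) (max_le ?_ ?_)
  · rw [natDegree_neg]
    refine le_trans natDegree_mul_le ?_
    have h1 := natDegree_C (b (M-2) t)
    have h2 := PT_natDegree_le a b c (M-1) t
    omega
  · refine le_trans natDegree_mul_le ?_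
    have h1 := natDegree_C (c (M-3) t)
    have h2 := PT_natDegree_le a b c (M-2) t
    omega

lemma star_flow (hflow : HFlow U) (t : ℝ) {M : ℕ} (hM : 2 ≤ M)
    (hstar : StarP a b c M) (k : ℕ) (j : Fin 2) :
    HasDerivAt (fun s => nuF a b c U s M k j)
      (nuF a b c U t (M+1) k j + a (M-1) t * nuF a b c U t M k j
        - (nuF a b c U t M k 0 * PsiM U t 0 j + nuF a b c U t M k 1 * PsiM U t 1 j)) t := by
  have h := flow_step a b c U hflow t M k j (dP a b c M t) (dP_natDegree a b c M t) (hstar t)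
  convert h using 1
  have e5 : Wf U t (X^(k+1) * PT a b c M t) j = nuF a b c U t M (k+1) j := rfl
  have e6 : X^k * dP a b c M t
      = C (-(b (M-2) t)) * (X^k * PT a b c (M-1) t)
        + C (-(c (M-3) t)) * (X^k * PT a b c (M-2) t) := by
    unfold dP
    rw [map_neg, map_neg]
    ring
  rw [e5, e6, Wf_add, Wf_smul, Wf_smul, nuF_rec a b c U t hM k j]
  have e7 : Wf U t (X^k * PT a b c (M-1) t) j = nuF a b c U t (M-1) k j := rfl
  have e8 : Wf U t (X^k * PT a b c (M-2) t) j = nuF a b c U t (M-2) k j := rfl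
  rw [e7, e8]
  ring
end D

section E
variable (a b c : ℕ → ℝ → ℂ)
variable (U : ℝ → ((Fin 2 → Polynomial ℂ) →ₗ[ℂ] Matrix (Fin 2) (Fin 2) ℂ))

structure Hyp : Prop where
  hM2 : HM2 U
  horth : ∀ t : ℝ, ∀ m j : ℕ, j < m → U t (fun i => X ^ j * Bvt a b c t m i) = 0
  hmom : ∀ t : ℝ, ∀ m : ℕ, U t (fun i => X ^ m * Bvt a b c t m i) = Cprod a b c t m
  hflow : HFlow U
  ha1 : ∀ t : ℝ, HasDerivAt (a 1) (b 1 t) t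
  hb0 : ∀ t, b 0 t = 0
  hc0 : ∀ t, c 0 t = 0
  hcne : ∀ n : ℕ, 1 ≤ n → ∀ t : ℝ, c n t ≠ 0

/-- γ_n = ∏ c_{2k}, row1 scale of Cprod -/
def gf : ℕ → ℝ → ℂ
  | 0 => fun _ => 1
  | n + 1 => fun t => c (2*n+2) t * gf n t

def pf : ℕ → ℝ → ℂ
  | 0 => fun _ => 1
  | n + 1 => fun t => c (2*n+1) t * pf n t - a 1 t * (b (2*n+2) t * gf c n t)

def qf : ℕ → ℝ → ℂ
  | 0 => fun _ => 0
  | n + 1 => fun t => c (2*n+1) t * qf n t + b (2*n+2) t * gf c n t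

def wfn (n : ℕ) (t : ℝ) : ℂ := pf a b c n t + a 1 t * qf b c n t

lemma wfn_zero (t : ℝ) : wfn a b c 0 t = 1 := by simp [wfn, pf, qf]

lemma wfn_rec (n : ℕ) (t : ℝ) : wfn a b c (n+1) t = c (2*n+1) t * wfn a b c n t := by
  simp only [wfn, pf, qf]
  ring

variable {a b c U}

lemma gf_ne (H : Hyp a b c U) (n : ℕ) (t : ℝ) : gf c n t ≠ 0 := by
  induction n with
  | zero => simp [gf]
  | succ n ih => exact mul_ne_zero (H.hcne (2*n+2) (by omega) t) ih

lemma wfn_ne (H : Hyp a b c U) (n : ℕ) (t : ℝ) : wfn a b c n t ≠ 0 := by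
  induction n with
  | zero => simp [wfn_zero]
  | succ n ih =>
      rw [wfn_rec]
      exact mul_ne_zero (H.hcne (2*n+1) (by omega) t) ih

lemma Cprod_entries (t : ℝ) (n : ℕ) :
    Cprod a b c t n = !![pf a b c n t, qf b c n t; -(a 1 t) * gf c n t, gf c n t] := by
  induction n with
  | zero =>
      show Cblk a b c 0 t = _
      rw [Cblk]
      simp [pf, qf, gf]
  | succ n ih =>
      show Cblk a b c (n+1) t * Cprod a b c t n = _
      rw [Cblk, ih]
      have h1 : 2*(n+1) - 1 = 2*n+1 := by omega
      have h2 : 2*(n+1) = 2*n+2 := by omega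
      simp only [Nat.succ_ne_zero, if_false, h1, h2]
      ext i j
      fin_cases i <;> fin_cases j <;>
        simp [Matrix.mul_apply, Fin.sum_univ_two, pf, qf, gf] <;> ring

lemma nuF_bot0 (t : ℝ) (k : ℕ) (j : Fin 2) : nuF a b c U t 0 k j = 0 := by
  show Wf U t (X^k * PT a b c 0 t) j = 0
  rw [PT_zero, mul_zero, Wf_zero]

lemma nuF_bot1 (t : ℝ) (k : ℕ) (j : Fin 2) : nuF a b c U t 1 k j = 0 := by
  show Wf U t (X^k * PT a b c 1 t) j = 0
  rw [PT_one, mul_zero, Wf_zero]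

lemma nu22_0 (H : Hyp a b c U) (t : ℝ) (n : ℕ) :
    nuF a b c U t (2*n+2) n 0 = pf a b c n t := by
  rw [nuF_mom0 a b c U H.hM2 H.hmom, Cprod_entries]; simp

lemma nu22_1 (H : Hyp a b c U) (t : ℝ) (n : ℕ) :
    nuF a b c U t (2*n+2) n 1 = qf b c n t := by
  rw [nuF_mom0 a b c U H.hM2 H.hmom, Cprod_entries]; simp

lemma nu23_0 (H : Hyp a b c U) (t : ℝ) (n : ℕ) :
    nuF a b c U t (2*n+3) n 0 = -(a 1 t) * gf c n t := by
  rw [nuF_mom1 a b c U H.hM2 H.hmom, Cprod_entries]; simp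

lemma nu23_1 (H : Hyp a b c U) (t : ℝ) (n : ℕ) :
    nuF a b c U t (2*n+3) n 1 = gf c n t := by
  rw [nuF_mom1 a b c U H.hM2 H.hmom, Cprod_entries]; simp

lemma nu21_val (H : Hyp a b c U) (t : ℝ) (j : Fin 2) :
    nuF a b c U t 2 1 j = (![0, 1] : Fin 2 → ℂ) j := by
  have h := nuF_rec a b c U t (le_refl 2) 0 j
  rw [nuF_bot1, nuF_bot0] at h
  have h30 := nu23_0 H t 0
  have h31 := nu23_1 H t 0
  have h20 := nu22_0 H t 0
  have h21 := nu22_1 H t 0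
  fin_cases j <;>
    simp_all [pf, qf, gf] <;> ring

lemma nu31_val (H : Hyp a b c U) (t : ℝ) (j : Fin 2) :
    nuF a b c U t 3 1 j = (![b 1 t - a 1 t * a 2 t, a 2 t] : Fin 2 → ℂ) j := by
  have h := nuF_rec a b c U t (by omega : 2 ≤ 3) 0 j
  rw [nuF_bot1] at h
  have h40 : nuF a b c U t 4 0 j = 0 := nuF_orth a b c U H.hM2 H.horth t (by omega) j
  have h30 := nu23_0 H t 0
  have h31 := nu23_1 H t 0
  have h20 := nu22_0 H t 0
  have h21 := nu22_1 H t 0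
  fin_cases j <;>
    simp_all [pf, qf, gf] <;> ring

lemma Psi_row0 (H : Hyp a b c U) (t : ℝ) (j : Fin 2) :
    PsiM U t 0 j = (![0, 1] : Fin 2 → ℂ) j := by
  have e : X * P0vec 0 = X^1 * PT a b c 2 t := by
    simp [P0vec, PT_two]
  rw [PsiM, U_row U H.hM2, e]
  exact nu21_val H t j

lemma Psi_row1 (H : Hyp a b c U) (t : ℝ) (j : Fin 2) :
    PsiM U t 1 j = (![b 1 t - a 1 t * a 2 t, a 1 t + a 2 t] : Fin 2 → ℂ) j := by
  have e : X * P0vec 1 = X^1 * PT a b c 3 t + C (a 1 t) * (X^1 * PT a b c 2 t) := by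
    have : PT a b c 3 t = X - C (a 1 t) := by
      rw [show (3:ℕ) = 0 + 3 from rfl, PT_succ]
      simp [PT_two, PT_one, PT_zero]
    rw [this, PT_two, P0vec]
    simp
    ring
  rw [PsiM, U_row U H.hM2, e, Wf_add, Wf_smul]
  have h3 := nu31_val H t j
  have h2 := nu21_val H t j
  show nuF a b c U t 3 1 j + a 1 t * nuF a b c U t 2 1 j = _
  rw [h3, h2]
  fin_cases j <;> simp <;> ring

/-- S-equation: evolution of the combination ν₀ + a₁ ν₁ -/
lemma S_eq (H : Hyp a b c U) (t : ℝ) {M : ℕ} (hM : 2 ≤ M) (hstar : StarP a b c M) (k : ℕ) :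
    HasDerivAt (fun s => nuF a b c U s M k 0 + a 1 s * nuF a b c U s M k 1)
      ((nuF a b c U t (M+1) k 0 + a 1 t * nuF a b c U t (M+1) k 1)
        + (a (M-1) t - a 1 t) * (nuF a b c U t M k 0 + a 1 t * nuF a b c U t M k 1)) t := by
  have h0 := star_flow a b c U H.hflow t hM hstar k 0
  have h1 := star_flow a b c U H.hflow t hM hstar k 1
  have h := h0.fun_add ((H.ha1 t).fun_mul h1)
  refine h.congr_deriv ?_
  rw [Psi_row0 H t 0, Psi_row0 H t 1, Psi_row1 H t 0, Psi_row1 H t 1]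
  simp only [Matrix.cons_val_zero, Matrix.cons_val_one, Matrix.head_cons]
  ring

/-- R-equation: evolution of ν₁ -/
lemma R_eq (H : Hyp a b c U) (t : ℝ) {M : ℕ} (hM : 2 ≤ M) (hstar : StarP a b c M) (k : ℕ) :
    HasDerivAt (fun s => nuF a b c U s M k 1)
      (nuF a b c U t (M+1) k 1 + (a (M-1) t - a 2 t) * nuF a b c U t M k 1
        - (nuF a b c U t M k 0 + a 1 t * nuF a b c U t M k 1)) t := by
  have h1 := star_flow a b c U H.hflow t hM hstar k 1
  convert h1 using 1
  rw [Psi_row0 H t 1, Psi_row1 H t 1]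
  simp only [Matrix.cons_val_zero, Matrix.cons_val_one, Matrix.head_cons]
  ring
end E

section F
variable (a b c : ℕ → ℝ → ℂ)
variable (U : ℝ → ((Fin 2 → Polynomial ℂ) →ₗ[ℂ] Matrix (Fin 2) (Fin 2) ℂ))

def sN (M k : ℕ) (s : ℝ) : ℂ := nuF a b c U s M k 0 + a 1 s * nuF a b c U s M k 1
def rN (M k : ℕ) (s : ℝ) : ℂ := nuF a b c U s M k 1

variable {a b c U}

-- value lemmas
lemma Va (H : Hyp a b c U) (n : ℕ) (t : ℝ) : sN a b c U (2*n+2) n t = wfn a b c n t := by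
  unfold sN wfn
  rw [nu22_0 H, nu22_1 H]

lemma Vb (H : Hyp a b c U) (n : ℕ) (t : ℝ) : rN a b c U (2*n+2) n t = qf b c n t := by
  unfold rN
  rw [nu22_1 H]

lemma Vc (H : Hyp a b c U) (n : ℕ) (t : ℝ) : sN a b c U (2*n+3) n t = 0 := by
  unfold sN
  rw [nu23_0 H, nu23_1 H]
  ring

lemma Vd (H : Hyp a b c U) (n : ℕ) (t : ℝ) : rN a b c U (2*n+3) n t = gf c n t := by
  unfold rN
  rw [nu23_1 H]

-- superdiagonal recursions
lemma Ve (H : Hyp a b c U) (n : ℕ) (t : ℝ) :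
    sN a b c U (2*n+3) (n+1) t
      = b (2*n+1) t * wfn a b c n t + c (2*n) t * sN a b c U (2*n+1) n t := by
  have h0 := nuF_rec a b c U t (by omega : 2 ≤ 2*n+3) n (0 : Fin 2)
  have h1 := nuF_rec a b c U t (by omega : 2 ≤ 2*n+3) n (1 : Fin 2)
  have e1 : 2*n+3-1 = 2*n+2 := by omega
  have e2 : 2*n+3-2 = 2*n+1 := by omega
  have e3 : 2*n+3-3 = 2*n := by omega
  have e4 : 2*n+3+1 = 2*(n+1)+2 := by omega
  rw [e1, e2, e3, e4] at h0 h1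
  have horth0 : nuF a b c U t (2*(n+1)+2) n 0 = 0 := nuF_orth a b c U H.hM2 H.horth t (by omega) 0
  have horth1 : nuF a b c U t (2*(n+1)+2) n 1 = 0 := nuF_orth a b c U H.hM2 H.horth t (by omega) 1
  have hs0 := nu23_0 H t n
  have hs1 := nu23_1 H t n
  have hw0 := nu22_0 H t n
  have hw1 := nu22_1 H t n
  unfold sN wfn
  rw [h0, h1, horth0, horth1, hs0, hs1, hw0, hw1]
  ring

lemma Vf (H : Hyp a b c U) (n : ℕ) (t : ℝ) :
    rN a b c U (2*n+3) (n+1) t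
      = a (2*n+2) t * gf c n t + b (2*n+1) t * qf b c n t
        + c (2*n) t * rN a b c U (2*n+1) n t := by
  have h1 := nuF_rec a b c U t (by omega : 2 ≤ 2*n+3) n (1 : Fin 2)
  have e1 : 2*n+3-1 = 2*n+2 := by omega
  have e2 : 2*n+3-2 = 2*n+1 := by omega
  have e3 : 2*n+3-3 = 2*n := by omega
  have e4 : 2*n+3+1 = 2*(n+1)+2 := by omega
  rw [e1, e2, e3, e4] at h1
  have horth1 : nuF a b c U t (2*(n+1)+2) n 1 = 0 := nuF_orth a b c U H.hM2 H.horth t (by omega) 1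
  unfold rN
  rw [h1, horth1, nu23_1 H, nu22_1 H]
  ring

lemma Vg (H : Hyp a b c U) (n : ℕ) (t : ℝ) :
    sN a b c U (2*n+2) (n+1) t
      = a (2*n+1) t * wfn a b c n t + b (2*n) t * sN a b c U (2*n+1) n t
        + c (2*n-1) t * sN a b c U (2*n) n t := by
  have h0 := nuF_rec a b c U t (by omega : 2 ≤ 2*n+2) n (0 : Fin 2)
  have h1 := nuF_rec a b c U t (by omega : 2 ≤ 2*n+2) n (1 : Fin 2)
  have e1 : 2*n+2-1 = 2*n+1 := by omega
  have e2 : 2*n+2-2 = 2*n := by omega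
  have e3 : 2*n+2-3 = 2*n-1 := by omega
  have e4 : 2*n+2+1 = 2*n+3 := by omega
  rw [e1, e2, e3, e4] at h0 h1
  have hs0 := nu23_0 H t n
  have hs1 := nu23_1 H t n
  have hw0 := nu22_0 H t n
  have hw1 := nu22_1 H t n
  unfold sN wfn
  rw [h0, h1, hs0, hs1, hw0, hw1]
  ring

-- derivative lemmas (transported)
lemma Dw (H : Hyp a b c U) (n : ℕ) (hstar : StarP a b c (2*n+2)) (t : ℝ) :
    HasDerivAt (wfn a b c n) ((a (2*n+1) t - a 1 t) * wfn a b c n t) t := by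
  have h := S_eq H t (by omega : 2 ≤ 2*n+2) hstar n
  have e1 : 2*n+2-1 = 2*n+1 := by omega
  have e2 : 2*n+2+1 = 2*n+3 := by omega
  rw [e1, e2] at h
  have hfun : (fun s => nuF a b c U s (2*n+2) n 0 + a 1 s * nuF a b c U s (2*n+2) n 1)
      = wfn a b c n := funext fun s => Va H n s
  rw [hfun] at h
  have hv : nuF a b c U t (2*n+3) n 0 + a 1 t * nuF a b c U t (2*n+3) n 1 = 0 := Vc H n t
  have hv2 : nuF a b c U t (2*n+2) n 0 + a 1 t * nuF a b c U t (2*n+2) n 1 = wfn a b c n t :=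
    Va H n t
  rw [hv, hv2] at h
  simpa using h

lemma Dq (H : Hyp a b c U) (n : ℕ) (hstar : StarP a b c (2*n+2)) (t : ℝ) :
    HasDerivAt (qf b c n)
      (gf c n t + (a (2*n+1) t - a 2 t) * qf b c n t - wfn a b c n t) t := by
  have h := R_eq H t (by omega : 2 ≤ 2*n+2) hstar n
  have e1 : 2*n+2-1 = 2*n+1 := by omega
  have e2 : 2*n+2+1 = 2*n+3 := by omega
  rw [e1, e2] at h
  have hfun : (fun s => nuF a b c U s (2*n+2) n 1) = qf b c n := funext fun s => Vb H n s
  rw [hfun] at h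
  rw [nu23_1 H, nu22_1 H] at h
  have hv2 : nuF a b c U t (2*n+2) n 0 + a 1 t * qf b c n t = wfn a b c n t := by
    have := Va H n t
    unfold sN at this
    rw [nu22_1 H] at this
    exact this
  rw [hv2] at h
  exact h

lemma Dg (H : Hyp a b c U) (n : ℕ) (hstar : StarP a b c (2*n+3)) (t : ℝ) :
    HasDerivAt (gf c n) ((a (2*n+2) t - a 2 t) * gf c n t) t := by
  have h := R_eq H t (by omega : 2 ≤ 2*n+3) hstar n
  have e1 : 2*n+3-1 = 2*n+2 := by omega
  have e2 : 2*n+3+1 = 2*(n+1)+2 := by omega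
  rw [e1, e2] at h
  have hfun : (fun s => nuF a b c U s (2*n+3) n 1) = gf c n := funext fun s => Vd H n s
  rw [hfun] at h
  rw [nuF_orth a b c U H.hM2 H.horth t (by omega) 1, nu23_1 H, nu23_0 H] at h
  have e3 : (0:ℂ) + (a (2*n+2) t - a 2 t) * gf c n t
      - (-(a 1 t) * gf c n t + a 1 t * gf c n t) = (a (2*n+2) t - a 2 t) * gf c n t := by ring
  rw [e3] at h
  exact h

lemma Dtau (H : Hyp a b c U) (n : ℕ) (hstar : StarP a b c (2*n+3)) (t : ℝ) :
    HasDerivAt (sN a b c U (2*n+3) (n+1))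
      (wfn a b c (n+1) t + (a (2*n+2) t - a 1 t) * sN a b c U (2*n+3) (n+1) t) t := by
  have h := S_eq H t (by omega : 2 ≤ 2*n+3) hstar (n+1)
  have e1 : 2*n+3-1 = 2*n+2 := by omega
  have e2 : 2*n+3+1 = 2*(n+1)+2 := by omega
  rw [e1, e2] at h
  have hv : nuF a b c U t (2*(n+1)+2) (n+1) 0 + a 1 t * nuF a b c U t (2*(n+1)+2) (n+1) 1
      = wfn a b c (n+1) t := Va H (n+1) t
  rw [hv] at h
  exact h

lemma Dsig (H : Hyp a b c U) (n : ℕ) (hstar : StarP a b c (2*n+2)) (t : ℝ) :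
    HasDerivAt (sN a b c U (2*n+2) (n+1))
      (sN a b c U (2*n+3) (n+1) t + (a (2*n+1) t - a 1 t) * sN a b c U (2*n+2) (n+1) t) t := by
  have h := S_eq H t (by omega : 2 ≤ 2*n+2) hstar (n+1)
  have e1 : 2*n+2-1 = 2*n+1 := by omega
  have e2 : 2*n+2+1 = 2*n+3 := by omega
  rw [e1, e2] at h
  exact h

lemma Dv1 (H : Hyp a b c U) (n : ℕ) (hstar : StarP a b c (2*n+3)) (t : ℝ) :
    HasDerivAt (rN a b c U (2*n+3) (n+1))
      (qf b c (n+1) t + (a (2*n+2) t - a 2 t) * rN a b c U (2*n+3) (n+1) t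
        - sN a b c U (2*n+3) (n+1) t) t := by
  have h := R_eq H t (by omega : 2 ≤ 2*n+3) hstar (n+1)
  have e1 : 2*n+3-1 = 2*n+2 := by omega
  have e2 : 2*n+3+1 = 2*(n+1)+2 := by omega
  rw [e1, e2] at h
  have hv : nuF a b c U t (2*(n+1)+2) (n+1) 1 = qf b c (n+1) t := Vb H (n+1) t
  rw [hv] at h
  exact h
end F

section G
variable {a b c : ℕ → ℝ → ℂ}
variable {U : ℝ → ((Fin 2 → Polynomial ℂ) →ₗ[ℂ] Matrix (Fin 2) (Fin 2) ℂ)}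

lemma hda_congr {f g : ℝ → ℂ} {v : ℂ} {t : ℝ} (hfg : ∀ s, f s = g s)
    (h : HasDerivAt f v t) : HasDerivAt g v t := (funext hfg : f = g) ▸ h

lemma hda_val {f : ℝ → ℂ} {v w : ℂ} {t : ℝ} (hv : v = w)
    (h : HasDerivAt f v t) : HasDerivAt f w t := hv ▸ h

lemma ODE_c_odd (H : Hyp a b c U) (n : ℕ)
    (h1 : StarP a b c (2*n+2)) (h2 : StarP a b c (2*(n+1)+2)) (t : ℝ) :
    HasDerivAt (c (2*n+1)) (c (2*n+1) t * (a (2*n+3) t - a (2*n+1) t)) t := by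
  have hwn := Dw H n h1 t
  have hwn1 := Dw H (n+1) h2 t
  have e : 2*(n+1)+1 = 2*n+3 := by omega
  rw [e] at hwn1
  have hdiv := hwn1.fun_div hwn (wfn_ne H n t)
  refine hda_val ?_ (hda_congr (fun s => ?_) hdiv)
  · rw [wfn_rec]
    field_simp [wfn_ne H n t]
    ring
  · rw [wfn_rec]
    field_simp [wfn_ne H n s]

lemma ODE_c_even (H : Hyp a b c U) (n : ℕ)
    (h1 : StarP a b c (2*n+3)) (h2 : StarP a b c (2*(n+1)+3)) (t : ℝ) :
    HasDerivAt (c (2*n+2)) (c (2*n+2) t * (a (2*n+4) t - a (2*n+2) t)) t := by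
  have hgn := Dg H n h1 t
  have hgn1 := Dg H (n+1) h2 t
  have e : 2*(n+1)+2 = 2*n+4 := by omega
  rw [e] at hgn1
  have hdiv := hgn1.fun_div hgn (gf_ne H n t)
  have hgrec : ∀ s, gf c (n+1) s = c (2*n+2) s * gf c n s := fun s => rfl
  refine hda_val ?_ (hda_congr (fun s => ?_) hdiv)
  · rw [hgrec]
    field_simp [gf_ne H n t]
    ring
  · rw [hgrec]
    field_simp [gf_ne H n s]

lemma ODE_b_odd (H : Hyp a b c U) (n : ℕ)
    (hs3 : StarP a b c (2*n+3)) (hs2 : StarP a b c (2*n+2)) (t : ℝ)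
    (hpre : HasDerivAt (fun s => c (2*n) s * sN a b c U (2*n+1) n s)
      (c (2*n) t * (a (2*n+2) t - a (2*n) t) * sN a b c U (2*n+1) n t
        + c (2*n) t * (wfn a b c n t + (a (2*n) t - a 1 t) * sN a b c U (2*n+1) n t)) t) :
    HasDerivAt (b (2*n+1))
      (b (2*n+1) t * (a (2*n+2) t - a (2*n+1) t) + c (2*n+1) t - c (2*n) t) t := by
  have htau := Dtau H n hs3 t
  have hF0 := htau.fun_sub hpre
  have hF : HasDerivAt (fun s => b (2*n+1) s * wfn a b c n s)
      ((wfn a b c (n+1) t + (a (2*n+2) t - a 1 t) * sN a b c U (2*n+3) (n+1) t)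
        - (c (2*n) t * (a (2*n+2) t - a (2*n) t) * sN a b c U (2*n+1) n t
        + c (2*n) t * (wfn a b c n t + (a (2*n) t - a 1 t) * sN a b c U (2*n+1) n t))) t := by
    refine hda_congr (fun s => ?_) hF0
    rw [Ve H n s]
    ring
  have hw := Dw H n hs2 t
  have hdiv := hF.fun_div hw (wfn_ne H n t)
  refine hda_val ?_ (hda_congr (fun s => ?_) hdiv)
  · rw [Ve H n t, wfn_rec]
    field_simp [wfn_ne H n t]
    ring
  · field_simp [wfn_ne H n s]

lemma ODE_b_even (H : Hyp a b c U) (n : ℕ)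
    (hs2 : StarP a b c (2*n+2)) (hs4 : StarP a b c (2*(n+1)+2)) (hs3 : StarP a b c (2*n+3))
    (t : ℝ)
    (hc : HasDerivAt (c (2*n+1)) (c (2*n+1) t * (a (2*n+3) t - a (2*n+1) t)) t) :
    HasDerivAt (b (2*n+2))
      (b (2*n+2) t * (a (2*n+3) t - a (2*n+2) t) + c (2*n+2) t - c (2*n+1) t) t := by
  have hq1 := Dq H (n+1) hs4 t
  have e : 2*(n+1)+1 = 2*n+3 := by omega
  rw [e] at hq1
  have hq0 := Dq H n hs2 t
  have hF0 := hq1.fun_sub (hc.fun_mul hq0)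
  have hqrec : ∀ s, qf b c (n+1) s = c (2*n+1) s * qf b c n s + b (2*n+2) s * gf c n s :=
    fun s => rfl
  have hgrec : ∀ s, gf c (n+1) s = c (2*n+2) s * gf c n s := fun s => rfl
  have hF : HasDerivAt (fun s => b (2*n+2) s * gf c n s)
      ((gf c (n+1) t + (a (2*n+3) t - a 2 t) * qf b c (n+1) t - wfn a b c (n+1) t)
        - (c (2*n+1) t * (a (2*n+3) t - a (2*n+1) t) * qf b c n t
          + c (2*n+1) t * (gf c n t + (a (2*n+1) t - a 2 t) * qf b c n t - wfn a b c n t))) t := by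
    refine hda_congr (fun s => ?_) hF0
    rw [hqrec]
    ring
  have hg := Dg H n hs3 t
  have hdiv := hF.fun_div hg (gf_ne H n t)
  refine hda_val ?_ (hda_congr (fun s => ?_) hdiv)
  · rw [hqrec, hgrec, wfn_rec]
    field_simp [gf_ne H n t]
    ring
  · field_simp [gf_ne H n s]

lemma ODE_a_odd (H : Hyp a b c U) (n : ℕ)
    (hs2 : StarP a b c (2*n+2)) (t : ℝ)
    (hpre1 : HasDerivAt (fun s => b (2*n) s * sN a b c U (2*n+1) n s)
      ((b (2*n) t * (a (2*n+1) t - a (2*n) t) + c (2*n) t - c (2*n-1) t)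
          * sN a b c U (2*n+1) n t
        + b (2*n) t * (wfn a b c n t + (a (2*n) t - a 1 t) * sN a b c U (2*n+1) n t)) t)
    (hpre2 : HasDerivAt (fun s => c (2*n-1) s * sN a b c U (2*n) n s)
      (c (2*n-1) t * (a (2*n+1) t - a (2*n-1) t) * sN a b c U (2*n) n t
        + c (2*n-1) t * (sN a b c U (2*n+1) n t
            + (a (2*n-1) t - a 1 t) * sN a b c U (2*n) n t)) t) :
    HasDerivAt (a (2*n+1)) (b (2*n+1) t - b (2*n) t) t := by
  have hsig := Dsig H n hs2 t
  have hF0 := (hsig.fun_sub hpre1).fun_sub hpre2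
  have hF : HasDerivAt (fun s => a (2*n+1) s * wfn a b c n s)
      ((sN a b c U (2*n+3) (n+1) t + (a (2*n+1) t - a 1 t) * sN a b c U (2*n+2) (n+1) t)
        - ((b (2*n) t * (a (2*n+1) t - a (2*n) t) + c (2*n) t - c (2*n-1) t)
              * sN a b c U (2*n+1) n t
            + b (2*n) t * (wfn a b c n t + (a (2*n) t - a 1 t) * sN a b c U (2*n+1) n t))
        - (c (2*n-1) t * (a (2*n+1) t - a (2*n-1) t) * sN a b c U (2*n) n t
            + c (2*n-1) t * (sN a b c U (2*n+1) n t
                + (a (2*n-1) t - a 1 t) * sN a b c U (2*n) n t))) t := by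
    refine hda_congr (fun s => ?_) hF0
    rw [Vg H n s]
    ring
  have hw := Dw H n hs2 t
  have hdiv := hF.fun_div hw (wfn_ne H n t)
  refine hda_val ?_ (hda_congr (fun s => ?_) hdiv)
  · rw [Ve H n t, Vg H n t]
    field_simp [wfn_ne H n t]
    ring
  · field_simp [wfn_ne H n s]

lemma ODE_a_even (H : Hyp a b c U) (n : ℕ)
    (hs3 : StarP a b c (2*n+3)) (hs2 : StarP a b c (2*n+2)) (t : ℝ)
    (hb : HasDerivAt (b (2*n+1))
      (b (2*n+1) t * (a (2*n+2) t - a (2*n+1) t) + c (2*n+1) t - c (2*n) t) t)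
    (hpre : HasDerivAt (fun s => c (2*n) s * rN a b c U (2*n+1) n s)
      (c (2*n) t * (a (2*n+2) t - a (2*n) t) * rN a b c U (2*n+1) n t
        + c (2*n) t * (qf b c n t + (a (2*n) t - a 2 t) * rN a b c U (2*n+1) n t
            - sN a b c U (2*n+1) n t)) t) :
    HasDerivAt (a (2*n+2)) (b (2*n+2) t - b (2*n+1) t) t := by
  have hv1 := Dv1 H n hs3 t
  have hq := Dq H n hs2 t
  have hF0 := (hv1.fun_sub (hb.fun_mul hq)).fun_sub hpre
  have hF : HasDerivAt (fun s => a (2*n+2) s * gf c n s)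
      ((qf b c (n+1) t + (a (2*n+2) t - a 2 t) * rN a b c U (2*n+3) (n+1) t
          - sN a b c U (2*n+3) (n+1) t)
        - ((b (2*n+1) t * (a (2*n+2) t - a (2*n+1) t) + c (2*n+1) t - c (2*n) t) * qf b c n t
            + b (2*n+1) t * (gf c n t + (a (2*n+1) t - a 2 t) * qf b c n t - wfn a b c n t))
        - (c (2*n) t * (a (2*n+2) t - a (2*n) t) * rN a b c U (2*n+1) n t
            + c (2*n) t * (qf b c n t + (a (2*n) t - a 2 t) * rN a b c U (2*n+1) n t
                - sN a b c U (2*n+1) n t))) t := by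
    refine hda_congr (fun s => ?_) hF0
    rw [Vf H n s]
    ring
  have hg := Dg H n hs3 t
  have hdiv := hF.fun_div hg (gf_ne H n t)
  have hqrec : ∀ s, qf b c (n+1) s = c (2*n+1) s * qf b c n s + b (2*n+2) s * gf c n s :=
    fun s => rfl
  refine hda_val ?_ (hda_congr (fun s => ?_) hdiv)
  · rw [Vf H n t, Ve H n t, hqrec]
    field_simp [gf_ne H n t]
    ring
  · field_simp [gf_ne H n s]
end G

section H
variable {a b c : ℕ → ℝ → ℂ}
variable {U : ℝ → ((Fin 2 → Polynomial ℂ) →ₗ[ℂ] Matrix (Fin 2) (Fin 2) ℂ)}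

lemma star2 : StarP a b c 2 := by
  intro t
  have hd : dP a b c 2 t = 0 := by
    show -(C (b 0 t) * PT a b c 1 t) - C (c 0 t) * PT a b c 0 t = 0
    rw [PT_one, PT_zero]
    simp
  refine HDP.congr_poly ?_ hd.symm
  exact HDP.congr_fun (HDP.const 1 t) (fun s => (PT_two a b c s).symm)

lemma star3 (ha1 : ∀ t : ℝ, HasDerivAt (a 1) (b 1 t) t) : StarP a b c 3 := by
  intro t
  have hPT3 : ∀ s, PT a b c 3 s = X - C (a 1 s) := fun s => by
    rw [show (3:ℕ) = 0 + 3 from rfl, PT_succ]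
    simp [PT_two, PT_one, PT_zero]
  have hd : dP a b c 3 t = -C (b 1 t) := by
    show -(C (b 1 t) * PT a b c 2 t) - C (c 0 t) * PT a b c 1 t = -C (b 1 t)
    rw [PT_two, PT_one]
    simp
  rw [hd]
  intro k
  have hfe : (fun s => (PT a b c 3 s).coeff k) = fun s => (X - C (a 1 s)).coeff k := by
    funext s; rw [hPT3 s]
  rw [hfe]
  match k with
  | 0 =>
      simp only [coeff_sub, coeff_X_zero, coeff_C_zero, zero_sub, coeff_neg, coeff_C_zero]
      exact (ha1 t).neg
  | 1 =>
      have : (fun s => (X - C (a 1 s)).coeff 1) = fun _ => (1:ℂ) := by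
        funext s; simp [coeff_sub, coeff_C]
      rw [this]
      have hv : (-C (b 1 t) : Polynomial ℂ).coeff 1 = 0 := by simp [coeff_C]
      rw [hv]
      exact hasDerivAt_const t 1
  | (k+2) =>
      have : (fun s => (X - C (a 1 s)).coeff (k+2)) = fun _ => (0:ℂ) := by
        funext s; simp [coeff_sub, coeff_X, coeff_C]
      rw [this]
      have hv : (-C (b 1 t) : Polynomial ℂ).coeff (k+2) = 0 := by simp [coeff_C]
      rw [hv]
      exact hasDerivAt_const t 0

lemma star4 (H : Hyp a b c U) (hs3 : StarP a b c 3) (hs2 : StarP a b c 2)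
    (hA2 : ∀ t : ℝ, HasDerivAt (a 2) (b 2 t - b 1 t) t)
    (hB1 : ∀ t : ℝ, HasDerivAt (b 1)
      (b 1 t * (a 2 t - a 1 t) + c 1 t - c 0 t) t) : StarP a b c 4 := by
  intro t
  have hc0' : HasDerivAt (c 0) 0 t := by
    refine hda_congr (fun s => (H.hc0 s).symm) ?_
    exact hasDerivAt_const t 0
  have hs1 : HDP (fun s => PT a b c 1 s) 0 t := by
    exact HDP.congr_fun (HDP.const 0 t) (fun s => (PT_one a b c s).symm)
  have h1 := (hs3 t).X_mul
  have h2 := HDP.C_mul (hA2 t) (hs3 t)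
  have h3 := HDP.C_mul (hB1 t) (hs2 t)
  have h4 := HDP.C_mul hc0' hs1
  have h5 := ((h1.sub h2).sub h3).sub h4
  refine HDP.congr_poly (HDP.congr_fun h5 (fun s => ?_)) ?_
  · conv_rhs => rw [show (4:ℕ) = 1 + 3 from rfl, PT_succ]
    ring
  · have d4 : dP a b c 4 t = -(C (b 2 t) * PT a b c 3 t) - C (c 1 t) * PT a b c 2 t := rfl
    have d3 : dP a b c 3 t = -(C (b 1 t) * PT a b c 2 t) - C (c 0 t) * PT a b c 1 t := rfl
    have d2 : dP a b c 2 t = -(C (b 0 t) * PT a b c 1 t) - C (c 0 t) * PT a b c 0 t := rfl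
    have r2 := PT_rec a b c 2 (le_refl 2) t
    rw [d4, d3, d2]
    norm_num at r2
    rw [PT_one, PT_zero] at r2 ⊢
    simp only [_root_.map_sub, _root_.map_add, _root_.map_mul, H.hc0, _root_.map_zero]
    linear_combination (-(C (b 1 t))) * r2

lemma star_step (H : Hyp a b c U) (m : ℕ)
    (hSM : StarP a b c (m+4)) (hSM1 : StarP a b c (m+3)) (hSM2 : StarP a b c (m+2))
    (hA : ∀ t : ℝ, HasDerivAt (a (m+3)) (b (m+3) t - b (m+2) t) t)
    (hB : ∀ t : ℝ, HasDerivAt (b (m+2))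
      (b (m+2) t * (a (m+3) t - a (m+2) t) + c (m+2) t - c (m+1) t) t)
    (hC : ∀ t : ℝ, HasDerivAt (c (m+1)) (c (m+1) t * (a (m+3) t - a (m+1) t)) t) :
    StarP a b c (m+5) := by
  intro t
  have h1 := (hSM t).X_mul
  have h2 := HDP.C_mul (hA t) (hSM t)
  have h3 := HDP.C_mul (hB t) (hSM1 t)
  have h4 := HDP.C_mul (hC t) (hSM2 t)
  have h5 := ((h1.sub h2).sub h3).sub h4
  refine HDP.congr_poly (HDP.congr_fun h5 (fun s => ?_)) ?_
  · conv_rhs => rw [show m+5 = (m+2) + 3 from rfl, PT_succ]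
    have e1 : m+2+1 = m+3 := rfl
    have e2 : m+2-1 = m+1 := rfl
    rw [e1, e2]
    ring
  · have d5 : dP a b c (m+5) t
        = -(C (b (m+3) t) * PT a b c (m+4) t) - C (c (m+2) t) * PT a b c (m+3) t := rfl
    have d4 : dP a b c (m+4) t
        = -(C (b (m+2) t) * PT a b c (m+3) t) - C (c (m+1) t) * PT a b c (m+2) t := rfl
    have d3 : dP a b c (m+3) t
        = -(C (b (m+1) t) * PT a b c (m+2) t) - C (c m t) * PT a b c (m+1) t := rfl
    have d2 : dP a b c (m+2) t
        = -(C (b m t) * PT a b c (m+1) t) - C (c (m-1) t) * PT a b c m t := rfl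
    have r3 := PT_rec a b c (m+3) (by omega) t
    have r2 := PT_rec a b c (m+2) (by omega) t
    have e1 : m+3+1 = m+4 := rfl
    have e2 : m+3-1 = m+2 := rfl
    have e3 : m+3-2 = m+1 := rfl
    have e4 : m+3-3 = m := rfl
    rw [e1, e2, e3, e4] at r3
    have f1 : m+2+1 = m+3 := rfl
    have f2 : m+2-1 = m+1 := rfl
    have f3 : m+2-2 = m := rfl
    have f4 : m+2-3 = m-1 := rfl
    rw [f1, f2, f3, f4] at r2
    rw [d5, d4, d3, d2]
    simp only [_root_.map_sub, _root_.map_add, _root_.map_mul]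
    linear_combination (-(C (b (m+2) t))) * r3 - C (c (m+1) t) * r2
end H

section I
variable {a b c : ℕ → ℝ → ℂ}
variable {U : ℝ → ((Fin 2 → Polynomial ℂ) →ₗ[ℂ] Matrix (Fin 2) (Fin 2) ℂ)}

lemma star0 : StarP a b c 0 := by
  intro t
  have hd : dP a b c 0 t = 0 := by
    show -(C (b 0 t) * PT a b c 0 t) - C (c 0 t) * PT a b c 0 t = 0
    rw [PT_zero]; simp
  refine HDP.congr_poly ?_ hd.symm
  exact HDP.congr_fun (HDP.const 0 t) (fun s => (PT_zero a b c s).symm)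

lemma star1 : StarP a b c 1 := by
  intro t
  have hd : dP a b c 1 t = 0 := by
    show -(C (b 0 t) * PT a b c 0 t) - C (c 0 t) * PT a b c 0 t = 0
    rw [PT_zero]; simp
  refine HDP.congr_poly ?_ hd.symm
  exact HDP.congr_fun (HDP.const 0 t) (fun s => (PT_one a b c s).symm)

def PKG (a b c : ℕ → ℝ → ℂ)
    (U : ℝ → ((Fin 2 → Polynomial ℂ) →ₗ[ℂ] Matrix (Fin 2) (Fin 2) ℂ)) (n : ℕ) : Prop :=
  (∀ M, M ≤ 2*n+3 → StarP a b c M) ∧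
  (∀ m, 1 ≤ m → m ≤ 2*n+2 → ∀ t, HasDerivAt (a m) (b m t - b (m-1) t) t) ∧
  (∀ m, m ≤ 2*n+1 → ∀ t,
    HasDerivAt (b m) (b m t * (a (m+1) t - a m t) + c m t - c (m-1) t) t) ∧
  (∀ m, m ≤ 2*n → ∀ t, HasDerivAt (c m) (c m t * (a (m+2) t - a m t)) t)

lemma pkg_zero (H : Hyp a b c U) : PKG a b c U 0 := by
  have hb0' : ∀ t : ℝ, HasDerivAt (b 0) 0 t := fun t =>
    hda_congr (fun s => (H.hb0 s).symm) (hasDerivAt_const t 0)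
  have hc0' : ∀ t : ℝ, HasDerivAt (c 0) 0 t := fun t =>
    hda_congr (fun s => (H.hc0 s).symm) (hasDerivAt_const t 0)
  have hS : ∀ M, M ≤ 2*0+3 → StarP a b c M := by
    intro M hM
    interval_cases M
    · exact star0
    · exact star1
    · exact star2
    · exact star3 H.ha1
  have hSB1 : ∀ t, HasDerivAt (b 1) (b 1 t * (a 2 t - a 1 t) + c 1 t - c 0 t) t := by
    intro t
    refine ODE_b_odd H 0 (hS 3 (by omega)) (hS 2 (by omega)) t ?_
    refine hda_val (by rw [H.hc0]; ring) (hda_congr (fun s => ?_) (hasDerivAt_const t 0))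
    rw [H.hc0]; ring
  have hSA2 : ∀ t, HasDerivAt (a 2) (b 2 t - b 1 t) t := by
    intro t
    refine ODE_a_even H 0 (hS 3 (by omega)) (hS 2 (by omega)) t (hSB1 t) ?_
    refine hda_val (by rw [H.hc0]; ring) (hda_congr (fun s => ?_) (hasDerivAt_const t 0))
    rw [H.hc0]; ring
  refine ⟨hS, ?_, ?_, ?_⟩
  · intro m h1 h2 t
    interval_cases m
    · exact hda_val (by rw [H.hb0]; ring) (H.ha1 t)
    · exact hSA2 t
  · intro m h2 t
    interval_cases m
    · exact hda_val (by rw [H.hb0, H.hc0]; ring) (hb0' t)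
    · exact hSB1 t
  · intro m h2 t
    interval_cases m
    exact hda_val (by rw [H.hc0]; ring) (hc0' t)

lemma pkg_succ (H : Hyp a b c U) (n : ℕ) (hp : PKG a b c U n) : PKG a b c U (n+1) := by
  obtain ⟨hS, hA, hB, hC⟩ := hp
  -- (1) Star (2n+4)
  have hS4 : StarP a b c (2*n+4) := by
    match n with
    | 0 =>
        exact star4 H (hS 3 (by omega)) (hS 2 (by omega))
          (fun t => hA 2 (by omega) (by omega) t)
          (fun t => hB 1 (by omega) t)
    | (p+1) =>
        have h := star_step H (2*p+1) (hS (2*p+5) (by omega)) (hS (2*p+4) (by omega))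
          (hS (2*p+3) (by omega))
          (fun t => hA (2*p+4) (by omega) (by omega) t)
          (fun t => hB (2*p+3) (by omega) t)
          (fun t => hC (2*p+2) (by omega) t)
        exact h
  -- (2) c (2n+1)
  have hc1 : ∀ t, HasDerivAt (c (2*n+1)) (c (2*n+1) t * (a (2*n+3) t - a (2*n+1) t)) t :=
    fun t => ODE_c_odd H n (hS (2*n+2) (by omega)) hS4 t
  -- (3) b (2n+2)
  have hb2 : ∀ t, HasDerivAt (b (2*n+2))
      (b (2*n+2) t * (a (2*n+3) t - a (2*n+2) t) + c (2*n+2) t - c (2*n+1) t) t :=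
    fun t => ODE_b_even H n (hS (2*n+2) (by omega)) hS4 (hS (2*n+3) (by omega)) t (hc1 t)
  -- (4) a (2n+3)
  have ha3 : ∀ t, HasDerivAt (a (2*n+3)) (b (2*n+3) t - b (2*n+2) t) t := by
    intro t
    have h := ODE_a_odd H (n+1) hS4 t
      ((hb2 t).mul (Dtau H n (hS (2*n+3) (by omega)) t))
      ((hc1 t).mul (Dsig H n (hS (2*n+2) (by omega)) t))
    exact h
  -- (5) Star (2n+5)
  have hS5 : StarP a b c (2*n+5) :=
    star_step H (2*n) hS4 (hS (2*n+3) (by omega)) (hS (2*n+2) (by omega)) ha3 hb2 hc1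
  -- (6) c (2n+2)
  have hc2 : ∀ t, HasDerivAt (c (2*n+2)) (c (2*n+2) t * (a (2*n+4) t - a (2*n+2) t)) t :=
    fun t => ODE_c_even H n (hS (2*n+3) (by omega)) hS5 t
  -- (7) b (2n+3)
  have hb3 : ∀ t, HasDerivAt (b (2*n+3))
      (b (2*n+3) t * (a (2*n+4) t - a (2*n+3) t) + c (2*n+3) t - c (2*n+2) t) t := by
    intro t
    exact ODE_b_odd H (n+1) hS5 hS4 t
      ((hc2 t).mul (Dtau H n (hS (2*n+3) (by omega)) t))
  -- (8) a (2n+4)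
  have ha4 : ∀ t, HasDerivAt (a (2*n+4)) (b (2*n+4) t - b (2*n+3) t) t := by
    intro t
    exact ODE_a_even H (n+1) hS5 hS4 t (hb3 t)
      ((hc2 t).mul (Dv1 H n (hS (2*n+3) (by omega)) t))
  refine ⟨?_, ?_, ?_, ?_⟩
  · intro M hM
    rcases (by omega : M ≤ 2*n+3 ∨ M = 2*n+4 ∨ M = 2*n+5) with h | h | h
    · exact hS M h
    · subst h; exact hS4
    · subst h; exact hS5
  · intro m h1 h2 t
    rcases (by omega : m ≤ 2*n+2 ∨ m = 2*n+3 ∨ m = 2*n+4) with h | h | h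
    · exact hA m h1 h t
    · subst h; exact ha3 t
    · subst h; exact ha4 t
  · intro m h2 t
    rcases (by omega : m ≤ 2*n+1 ∨ m = 2*n+2 ∨ m = 2*n+3) with h | h | h
    · exact hB m h t
    · subst h; exact hb2 t
    · subst h; exact hb3 t
  · intro m h2 t
    rcases (by omega : m ≤ 2*n ∨ m = 2*n+1 ∨ m = 2*n+2) with h | h | h
    · exact hC m h t
    · subst h; exact hc1 t
    · subst h; exact hc2 t

lemma pkg_all (H : Hyp a b c U) : ∀ n, PKG a b c U n := by
  intro n
  induction n with
  | zero => exact pkg_zero H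
  | succ n ih => exact pkg_succ H n ih
end I

section J
variable {a b c : ℕ → ℝ → ℂ}
variable {U : ℝ → ((Fin 2 → Polynomial ℂ) →ₗ[ℂ] Matrix (Fin 2) (Fin 2) ℂ)}

lemma RHS0 (H : Hyp a b c U) (n : ℕ) (t : ℝ) :
    (-((Cblk a b c n t).map C *ᵥ Bvtprev a b c t n)
      - (Dblk b n t).map C *ᵥ Bvt a b c t n) 0 = dP a b c (2*n+2) t := by
  have hd : dP a b c (2*n+2) t
      = -(C (b (2*n) t) * PT a b c (2*n+1) t) - C (c (2*n-1) t) * PT a b c (2*n) t := rfl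
  rw [hd]
  match n with
  | 0 =>
      show -((Cblk a b c 0 t).map C *ᵥ (0 : Fin 2 → Polynomial ℂ)) 0
          - ((Dblk b 0 t).map C *ᵥ Bvt a b c t 0) 0 = _
      rw [Matrix.mulVec_zero]
      simp [Dblk, Matrix.mulVec, dotProduct, Fin.sum_univ_two, Matrix.map_apply,
        H.hb0, PT_one, PT_zero]
  | (m+1) =>
      show -((Cblk a b c (m+1) t).map C *ᵥ Bvt a b c t m) 0
          - ((Dblk b (m+1) t).map C *ᵥ Bvt a b c t (m+1)) 0 = _
      rw [Cblk, if_neg (Nat.succ_ne_zero m)]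
      have e1 : 2*(m+1) - 1 = 2*m+1 := by omega
      have e2 : 2*(m+1) = 2*m+2 := by omega
      rw [e1, e2]
      have hB0 : Bvt a b c t m 0 = PT a b c (2*m+2) t := rfl
      have hB1 : Bvt a b c t m 1 = PT a b c (2*m+3) t := rfl
      simp [Dblk, Matrix.mulVec, dotProduct, Fin.sum_univ_two, Matrix.map_apply, hB0, hB1]
      rw [show 2*m+2+1 = 2*m+3 from rfl]
      ring

lemma RHS1 (H : Hyp a b c U) (n : ℕ) (t : ℝ) :
    (-((Cblk a b c n t).map C *ᵥ Bvtprev a b c t n)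
      - (Dblk b n t).map C *ᵥ Bvt a b c t n) 1 = dP a b c (2*n+3) t := by
  have hd : dP a b c (2*n+3) t
      = -(C (b (2*n+1) t) * PT a b c (2*n+2) t) - C (c (2*n) t) * PT a b c (2*n+1) t := rfl
  rw [hd]
  match n with
  | 0 =>
      show -((Cblk a b c 0 t).map C *ᵥ (0 : Fin 2 → Polynomial ℂ)) 1
          - ((Dblk b 0 t).map C *ᵥ Bvt a b c t 0) 1 = _
      rw [Matrix.mulVec_zero]
      have hB0 : Bvt a b c t 0 0 = PT a b c 2 t := rfl
      simp [Dblk, Matrix.mulVec, dotProduct, Fin.sum_univ_two, Matrix.map_apply,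
        hB0, H.hc0, PT_one]
  | (m+1) =>
      show -((Cblk a b c (m+1) t).map C *ᵥ Bvt a b c t m) 1
          - ((Dblk b (m+1) t).map C *ᵥ Bvt a b c t (m+1)) 1 = _
      rw [Cblk, if_neg (Nat.succ_ne_zero m)]
      have e2 : 2*(m+1) = 2*m+2 := by omega
      rw [e2]
      have hB1 : Bvt a b c t m 1 = PT a b c (2*m+3) t := rfl
      have hB0' : Bvt a b c t (m+1) 0 = PT a b c (2*(m+1)+2) t := rfl
      simp [Dblk, Matrix.mulVec, dotProduct, Fin.sum_univ_two, Matrix.map_apply, hB1, hB0']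
      norm_num
      ring
end J

/-- If the normalized vector of functionals evolves according to
`(dU/dt)(B) = U(zB) − U(B) U(z P₀)`, then the vector polynomials satisfy
`Ḃ_n = −C_n B_{n-1} − D_n B_n` (derivatives taken coefficientwise). -/
theorem functional_evolution_implies_polynomial_evolution
    (a b c : ℕ → ℝ → ℂ)
    (hdiff : ∀ n, Differentiable ℝ (a n) ∧ Differentiable ℝ (b n) ∧ Differentiable ℝ (c n))
    (hb0 : ∀ t, b 0 t = 0) (hc0 : ∀ t, c 0 t = 0)
    (hcne : ∀ n : ℕ, 1 ≤ n → ∀ t : ℝ, c n t ≠ 0)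
    (ha1 : ∀ t : ℝ, HasDerivAt (a 1) (b 1 t) t)
    (U : ℝ → ((Fin 2 → Polynomial ℂ) →ₗ[ℂ] Matrix (Fin 2) (Fin 2) ℂ))
    (hM2 : ∀ t : ℝ, ∀ (A : Matrix (Fin 2) (Fin 2) ℂ) (Q : Fin 2 → Polynomial ℂ),
      U t (A.map C *ᵥ Q) = A * U t Q)
    (horth : ∀ t : ℝ, ∀ m j : ℕ, j < m → U t (fun i => X ^ j * Bvt a b c t m i) = 0)
    (hmom : ∀ t : ℝ, ∀ m : ℕ,
      U t (fun i => X ^ m * Bvt a b c t m i) = Cprod a b c t m)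
    (hflow : ∀ (Q : Fin 2 → Polynomial ℂ) (t : ℝ) (i j : Fin 2),
      HasDerivAt (fun s => U s Q i j)
        ((U t (fun r => X * Q r) - U t Q * U t (fun r => X * P0vec r)) i j) t) :
    ∀ n : ℕ, ∀ t : ℝ, ∀ i : Fin 2, ∀ k : ℕ,
      HasDerivAt (fun s => (Bvt a b c s n i).coeff k)
        (((-((Cblk a b c n t).map C *ᵥ Bvtprev a b c t n)
            - (Dblk b n t).map C *ᵥ Bvt a b c t n) i).coeff k) t := by
  have H : Hyp a b c U := ⟨hM2, horth, hmom, hflow, ha1, hb0, hc0, hcne⟩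
  intro n t i k
  have hp := (pkg_all H n).1
  have hs2 : StarP a b c (2*n+2) := hp (2*n+2) (by omega)
  have hs3 : StarP a b c (2*n+3) := hp (2*n+3) (by omega)
  fin_cases i
  · have h := hs2 t k
    show HasDerivAt (fun s => (Bvt a b c s n 0).coeff k)
      (((-((Cblk a b c n t).map C *ᵥ Bvtprev a b c t n)
          - (Dblk b n t).map C *ᵥ Bvt a b c t n) 0).coeff k) t
    rw [RHS0 H n t]
    exact h
  · have h := hs3 t k
    show HasDerivAt (fun s => (Bvt a b c s n 1).coeff k)
      (((-((Cblk a b c n t).map C *ᵥ Bvtprev a b c t n)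
          - (Dblk b n t).map C *ᵥ Bvt a b c t n) 1).coeff k) t
    rw [RHS1 H n t]
    exact h
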